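/- Corollary 1: Let the system be i-IOSS with functions β ∈ 𝒦ℒ, γ₁, γ₂ ∈ 𝒦, let h be 𝒦-continuous, let W ⊆ (ℝ^q)^ℕ be an input set, let K be a sampling set, and let σ₁ ∈ ℒ; let Ψ be the set of quadruples (x₀₁, x₀₂, w₁, w₂) with w₁, w₂ ∈ W that do not generate a pair of i-ISS trajectories relative to (β, γ₁, σ₁). If there exist γ_w, γ_h ∈ 𝒦 and a finite time t* ∈ ℕ such that for all (x₀₁, x₀₂, w₁, w₂) ∈ Ψ, every K_i ∈ K, and all t ≥ t*: |Δh(Δx(t))| ≤ γ_h(sup_{τ∈K_i, τ<t} |Δh(Δx(τ))|) ⊕ γ_w(sup_{0≤τ<t} |Δw(τ)|), then the system is sample-based i-IOSS on W with respect to K. -/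

import Mathlib

open Set Filter

noncomputable section

/-- `Vec m` is `ℝ^m` with the Euclidean norm. -/
abbrev Vec (m : ℕ) := EuclideanSpace ℝ (Fin m)

/-- A function `φ : ℝ≥0 → ℝ≥0` is of class 𝒦 (modeled on `ℝ`, restricted to `[0,∞)`):
continuous, strictly increasing and `φ 0 = 0`. -/
def IsClassK (φ : ℝ → ℝ) : Prop :=
  ContinuousOn φ (Ici 0) ∧ StrictMonoOn φ (Ici 0) ∧ φ 0 = 0

/-- A function `σ : ℕ → ℝ≥0` is of class ℒ: non-increasing with limit `0`. -/
def IsClassL (σ : ℕ → ℝ) : Prop :=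
  (∀ t, 0 ≤ σ t) ∧ Antitone σ ∧ Tendsto σ atTop (nhds 0)

/-- Class 𝒦ℒ. -/
def IsClassKL (β : ℝ → ℕ → ℝ) : Prop :=
  (∀ t, IsClassK fun s => β s t) ∧ ∀ s, 0 ≤ s → IsClassL fun t => β s t

/-- Solution map of `x(t+1) = f(x(t), w(t))`, `x(0) = x₀`. -/
def sol {n q : ℕ} (f : Vec n → Vec q → Vec n) (x0 : Vec n) (w : ℕ → Vec q) : ℕ → Vec n
  | 0 => x0
  | t + 1 => f (sol f x0 w t) (w t)

/-- `|Δx(t)|`. -/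
def nDx {n q : ℕ} (f : Vec n → Vec q → Vec n) (x01 x02 : Vec n) (w1 w2 : ℕ → Vec q)
    (t : ℕ) : ℝ :=
  ‖sol f x01 w1 t - sol f x02 w2 t‖

/-- `|Δh(Δx(t))|`. -/
def nDy {n q p : ℕ} (f : Vec n → Vec q → Vec n) (h : Vec n → Vec p)
    (x01 x02 : Vec n) (w1 w2 : ℕ → Vec q) (t : ℕ) : ℝ :=
  ‖h (sol f x01 w1 t) - h (sol f x02 w2 t)‖

/-- `|Δw(t)|`. -/
def nDw {q : ℕ} (w1 w2 : ℕ → Vec q) (t : ℕ) : ℝ := ‖w1 t - w2 t‖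

/-- `sup_{0 ≤ τ < t} g τ` (empty sup is `0` by the `Real.sSup` convention). -/
def supLt (t : ℕ) (g : ℕ → ℝ) : ℝ := sSup (g '' {τ | τ < t})

/-- `sup_{τ ∈ S, τ < t} g τ`. -/
def supMem (S : Set ℕ) (t : ℕ) (g : ℕ → ℝ) : ℝ := sSup (g '' {τ | τ ∈ S ∧ τ < t})

/-- Time-discounted max over `0 ≤ τ < t` of `β (g τ) (t - τ - 1)`. -/
def dmaxLt (t : ℕ) (g : ℕ → ℝ) (β : ℝ → ℕ → ℝ) : ℝ :=
  sSup ((fun τ => β (g τ) (t - τ - 1)) '' {τ | τ < t})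

/-- Time-discounted max over `τ ∈ S, τ < t` of `β (g τ) (t - τ - 1)`. -/
def dmaxMem (S : Set ℕ) (t : ℕ) (g : ℕ → ℝ) (β : ℝ → ℕ → ℝ) : ℝ :=
  sSup ((fun τ => β (g τ) (t - τ - 1)) '' {τ | τ ∈ S ∧ τ < t})

/-- `t^i_j = δ_i + ⋯ + δ_{i+j-1}` (the sequence `δ` is 1-based; `δ 0` is unused). -/
def sampT (δ : ℕ → ℕ) (i j : ℕ) : ℕ := ∑ r ∈ Finset.range j, δ (i + r)

/-- The sampling set `K_i = {t^i_j : j ≥ 1}`. -/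
def sampSet (δ : ℕ → ℕ) (i : ℕ) : Set ℕ := {m | ∃ j, 1 ≤ j ∧ m = sampT δ i j}

/-- The i-IOSS bound with given comparison functions. -/
def iIOSSBound {n q p : ℕ} (f : Vec n → Vec q → Vec n) (h : Vec n → Vec p)
    (β : ℝ → ℕ → ℝ) (γ1 γ2 : ℝ → ℝ) : Prop :=
  ∀ x01 x02 w1 w2 t,
    nDx f x01 x02 w1 w2 t ≤
      max (β ‖x01 - x02‖ t)
        (max (γ1 (supLt t (nDw w1 w2))) (γ2 (supLt t (nDy f h x01 x02 w1 w2))))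

/-- The sample-based i-IOSS bound w.r.t. the sampling set generated by `δ`. -/
def sampledIOSSBound {n q p : ℕ} (f : Vec n → Vec q → Vec n) (h : Vec n → Vec p)
    (δ : ℕ → ℕ) (β : ℝ → ℕ → ℝ) (γ1 γ2 : ℝ → ℝ) : Prop :=
  ∀ i, 1 ≤ i → ∀ x01 x02 w1 w2 t,
    nDx f x01 x02 w1 w2 t ≤
      max (β ‖x01 - x02‖ t)
        (max (γ1 (supLt t (nDw w1 w2)))
             (γ2 (supMem (sampSet δ i) t (nDy f h x01 x02 w1 w2))))

/-- The sample-based i-IOSS bound on an input set `W`. -/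
def sampledIOSSBoundOn {n q p : ℕ} (f : Vec n → Vec q → Vec n) (h : Vec n → Vec p)
    (W : Set (ℕ → Vec q)) (δ : ℕ → ℕ) (β : ℝ → ℕ → ℝ) (γ1 γ2 : ℝ → ℝ) : Prop :=
  ∀ i, 1 ≤ i → ∀ x01 x02, ∀ w1 ∈ W, ∀ w2 ∈ W, ∀ t,
    nDx f x01 x02 w1 w2 t ≤
      max (β ‖x01 - x02‖ t)
        (max (γ1 (supLt t (nDw w1 w2)))
             (γ2 (supMem (sampSet δ i) t (nDy f h x01 x02 w1 w2))))

/-- The sample-based time-discounted i-IOSS bound. -/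
def sampledTDBound {n q p : ℕ} (f : Vec n → Vec q → Vec n) (h : Vec n → Vec p)
    (δ : ℕ → ℕ) (βx βu βy : ℝ → ℕ → ℝ) : Prop :=
  ∀ i, 1 ≤ i → ∀ x01 x02 w1 w2 t,
    nDx f x01 x02 w1 w2 t ≤
      max (βx ‖x01 - x02‖ t)
        (max (dmaxLt t (nDw w1 w2) βu)
             (dmaxMem (sampSet δ i) t (nDy f h x01 x02 w1 w2) βy))

/-- The sample-based time-discounted i-IOSS bound on an input set `W`. -/
def sampledTDBoundOn {n q p : ℕ} (f : Vec n → Vec q → Vec n) (h : Vec n → Vec p)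
    (W : Set (ℕ → Vec q)) (δ : ℕ → ℕ) (βx βu βy : ℝ → ℕ → ℝ) : Prop :=
  ∀ i, 1 ≤ i → ∀ x01 x02, ∀ w1 ∈ W, ∀ w2 ∈ W, ∀ t,
    nDx f x01 x02 w1 w2 t ≤
      max (βx ‖x01 - x02‖ t)
        (max (dmaxLt t (nDw w1 w2) βu)
             (dmaxMem (sampSet δ i) t (nDy f h x01 x02 w1 w2) βy))

/-- `(x₀₁, x₀₂, w₁, w₂)` generates a pair of i-ISS trajectories relative to `(β, γ1, σ1)`. -/
def pairISS {n q : ℕ} (f : Vec n → Vec q → Vec n) (β : ℝ → ℕ → ℝ) (γ1 : ℝ → ℝ)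
    (σ1 : ℕ → ℝ) (x01 x02 : Vec n) (w1 w2 : ℕ → Vec q) : Prop :=
  ∀ t, nDx f x01 x02 w1 w2 t ≤
    max (β ‖x01 - x02‖ t)
      (sSup ((fun τ => γ1 (nDw w1 w2 τ) * σ1 (t - τ - 1)) '' {τ | τ < t}))


namespace Cor1

/-! ### sup lemmas -/

lemma bddAbove_image_lt (g : ℕ → ℝ) (t : ℕ) : BddAbove (g '' {τ | τ < t}) :=
  ((Set.finite_Iio t).image g).bddAbove

lemma bddAbove_image_mem (g : ℕ → ℝ) (S : Set ℕ) (t : ℕ) :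
    BddAbove (g '' {τ | τ ∈ S ∧ τ < t}) :=
  (((Set.finite_Iio t).subset (fun τ hτ => hτ.2)).image g).bddAbove

lemma supLt_nonneg {g : ℕ → ℝ} (hg : ∀ τ, 0 ≤ g τ) (t : ℕ) : 0 ≤ supLt t g :=
  Real.sSup_nonneg (by rintro y ⟨τ, -, rfl⟩; exact hg τ)

lemma le_supLt {g : ℕ → ℝ} {τ t : ℕ} (h : τ < t) : g τ ≤ supLt t g :=
  le_csSup (bddAbove_image_lt g t) ⟨τ, h, rfl⟩

lemma supLt_le {g : ℕ → ℝ} {t : ℕ} {a : ℝ} (ha : 0 ≤ a) (h : ∀ τ, τ < t → g τ ≤ a) :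
    supLt t g ≤ a :=
  Real.sSup_le (by rintro y ⟨τ, hτ, rfl⟩; exact h τ hτ) ha

lemma supLt_mono {g : ℕ → ℝ} (hg : ∀ τ, 0 ≤ g τ) {t1 t2 : ℕ} (h : t1 ≤ t2) :
    supLt t1 g ≤ supLt t2 g :=
  supLt_le (supLt_nonneg hg t2) (fun τ hτ => le_supLt (lt_of_lt_of_le hτ h))

lemma supMem_nonneg {g : ℕ → ℝ} (hg : ∀ τ, 0 ≤ g τ) (S : Set ℕ) (t : ℕ) :
    0 ≤ supMem S t g :=
  Real.sSup_nonneg (by rintro y ⟨τ, -, rfl⟩; exact hg τ)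

lemma le_supMem {g : ℕ → ℝ} {S : Set ℕ} {τ t : ℕ} (hS : τ ∈ S) (h : τ < t) :
    g τ ≤ supMem S t g :=
  le_csSup (bddAbove_image_mem g S t) ⟨τ, ⟨hS, h⟩, rfl⟩

lemma supMem_le {g : ℕ → ℝ} {S : Set ℕ} {t : ℕ} {a : ℝ} (ha : 0 ≤ a)
    (h : ∀ τ, τ ∈ S → τ < t → g τ ≤ a) : supMem S t g ≤ a :=
  Real.sSup_le (by rintro y ⟨τ, ⟨h1, h2⟩, rfl⟩; exact h τ h1 h2) ha

lemma supMem_mono {g : ℕ → ℝ} (hg : ∀ τ, 0 ≤ g τ) {S : Set ℕ} {t1 t2 : ℕ} (h : t1 ≤ t2) :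
    supMem S t1 g ≤ supMem S t2 g :=
  supMem_le (supMem_nonneg hg S t2) (fun τ hS hτ => le_supMem hS (lt_of_lt_of_le hτ h))

/-! ### class 𝒦 lemmas -/

lemma K.monoOn {φ : ℝ → ℝ} (h : IsClassK φ) : MonotoneOn φ (Ici 0) :=
  h.2.1.monotoneOn

lemma K.nonneg {φ : ℝ → ℝ} (h : IsClassK φ) {x : ℝ} (hx : 0 ≤ x) : 0 ≤ φ x := by
  have := K.monoOn h (self_mem_Ici) (mem_Ici.2 hx) hx
  rw [h.2.2] at this; exact this

lemma K.mono {φ : ℝ → ℝ} (h : IsClassK φ) {x y : ℝ} (hx : 0 ≤ x) (hxy : x ≤ y) :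
    φ x ≤ φ y :=
  K.monoOn h (mem_Ici.2 hx) (mem_Ici.2 (hx.trans hxy)) hxy

lemma K.id : IsClassK (fun s : ℝ => s) :=
  ⟨continuousOn_id, strictMonoOn_id, rfl⟩

/-- weak class: continuous, monotone, zero at zero, nonneg. -/
def IsK0 (φ : ℝ → ℝ) : Prop :=
  ContinuousOn φ (Ici 0) ∧ MonotoneOn φ (Ici 0) ∧ φ 0 = 0 ∧ ∀ x, 0 ≤ x → 0 ≤ φ x

lemma K.toK0 {φ : ℝ → ℝ} (h : IsClassK φ) : IsK0 φ :=
  ⟨h.1, K.monoOn h, h.2.2, fun _ hx => K.nonneg h hx⟩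

lemma K0.zero : IsK0 (fun _ : ℝ => 0) :=
  ⟨continuousOn_const, monotoneOn_const, rfl, fun _ _ => le_refl 0⟩

lemma K0.mapsTo {φ : ℝ → ℝ} (h : IsK0 φ) : MapsTo φ (Ici 0) (Ici 0) :=
  fun x hx => mem_Ici.2 (h.2.2.2 x (mem_Ici.1 hx))

lemma K0.comp {φ ψ : ℝ → ℝ} (hφ : IsK0 φ) (hψ : IsK0 ψ) :
    IsK0 (fun s => φ (ψ s)) := by
  refine ⟨hφ.1.comp hψ.1 (K0.mapsTo hψ), ?_, ?_, ?_⟩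
  · intro x hx y hy hxy
    exact hφ.2.1 (K0.mapsTo hψ hx) (K0.mapsTo hψ hy) (hψ.2.1 hx hy hxy)
  · show φ (ψ 0) = 0
    rw [hψ.2.2.1, hφ.2.2.1]
  · exact fun x hx => hφ.2.2.2 _ (hψ.2.2.2 x hx)

lemma K0.add {φ ψ : ℝ → ℝ} (hφ : IsK0 φ) (hψ : IsK0 ψ) :
    IsK0 (fun s => φ s + ψ s) :=
  ⟨hφ.1.add hψ.1,
    fun x hx y hy hxy => add_le_add (hφ.2.1 hx hy hxy) (hψ.2.1 hx hy hxy),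
    by show φ 0 + ψ 0 = 0; rw [hφ.2.2.1, hψ.2.2.1, add_zero],
    fun x hx => add_nonneg (hφ.2.2.2 x hx) (hψ.2.2.2 x hx)⟩

lemma K0.max {φ ψ : ℝ → ℝ} (hφ : IsK0 φ) (hψ : IsK0 ψ) :
    IsK0 (fun s => max (φ s) (ψ s)) :=
  ⟨hφ.1.sup hψ.1,
    fun x hx y hy hxy => max_le_max (hφ.2.1 hx hy hxy) (hψ.2.1 hx hy hxy),
    by show (φ 0) ⊔ (ψ 0) = 0; rw [hφ.2.2.1, hψ.2.2.1, max_self],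
    fun x hx => le_max_of_le_left (hφ.2.2.2 x hx)⟩

lemma K0.const_mul {φ : ℝ → ℝ} (hφ : IsK0 φ) {c : ℝ} (hc : 0 ≤ c) :
    IsK0 (fun s => c * φ s) :=
  ⟨continuousOn_const.mul hφ.1, fun x hx y hy hxy =>
      mul_le_mul_of_nonneg_left (hφ.2.1 hx hy hxy) hc,
    by show c * φ 0 = 0; rw [hφ.2.2.1, mul_zero],
    fun x hx => mul_nonneg hc (hφ.2.2.2 x hx)⟩

lemma K.comp {φ ψ : ℝ → ℝ} (hφ : IsClassK φ) (hψ : IsClassK ψ) :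
    IsClassK (fun s => φ (ψ s)) :=
  ⟨hφ.1.comp hψ.1 (K0.mapsTo (K.toK0 hψ)),
    hφ.2.1.comp hψ.2.1 (K0.mapsTo (K.toK0 hψ)),
    by show φ (ψ 0) = 0; rw [hψ.2.2, hφ.2.2]⟩

lemma K.add_K0 {φ ψ : ℝ → ℝ} (hφ : IsClassK φ) (hψ : IsK0 ψ) :
    IsClassK (fun s => φ s + ψ s) := by
  refine ⟨hφ.1.add hψ.1, ?_, by show φ 0 + ψ 0 = 0; rw [hφ.2.2, hψ.2.2.1, add_zero]⟩
  intro x hx y hy hxy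
  exact add_lt_add_of_lt_of_le (hφ.2.1 hx hy hxy) (hψ.2.1 hx hy hxy.le)

lemma monoOn_max_le {φ : ℝ → ℝ} (h : MonotoneOn φ (Ici 0)) {a b : ℝ}
    (ha : 0 ≤ a) (hb : 0 ≤ b) : φ (max a b) ≤ max (φ a) (φ b) := by
  rcases le_total a b with hab | hab
  · rw [max_eq_right hab]; exact le_max_right _ _
  · rw [max_eq_left hab]; exact le_max_left _ _

lemma K.max_le {φ : ℝ → ℝ} (h : IsClassK φ) {a b : ℝ}
    (ha : 0 ≤ a) (hb : 0 ≤ b) : φ (max a b) ≤ max (φ a) (φ b) :=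
  monoOn_max_le (K.monoOn h) ha hb

lemma K.map_max3 {φ : ℝ → ℝ} (h : IsClassK φ) {a b c : ℝ} (ha : 0 ≤ a) (hb : 0 ≤ b)
    (hc : 0 ≤ c) : φ (max a (max b c)) ≤ max (φ a) (max (φ b) (φ c)) :=
  (K.max_le h ha (le_max_of_le_left hb)).trans (max_le_max le_rfl (K.max_le h hb hc))

/-! ### class 𝒦ℒ lemmas -/

lemma KL.mono1 {β : ℝ → ℕ → ℝ} (h : IsClassKL β) {x y : ℝ} (hx : 0 ≤ x) (hxy : x ≤ y)
    (t : ℕ) : β x t ≤ β y t :=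
  K.mono (h.1 t) hx hxy

lemma KL.nonneg {β : ℝ → ℕ → ℝ} (h : IsClassKL β) {x : ℝ} (hx : 0 ≤ x) (t : ℕ) :
    0 ≤ β x t :=
  K.nonneg (h.1 t) hx

lemma KL.anti {β : ℝ → ℕ → ℝ} (h : IsClassKL β) {x : ℝ} (hx : 0 ≤ x) {t1 t2 : ℕ}
    (ht : t1 ≤ t2) : β x t2 ≤ β x t1 :=
  (h.2 x hx).2.1 ht

lemma KL.max_le {β : ℝ → ℕ → ℝ} (h : IsClassKL β) {a b : ℝ}
    (ha : 0 ≤ a) (hb : 0 ≤ b) (t : ℕ) : β (max a b) t ≤ max (β a t) (β b t) :=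
  monoOn_max_le (K.monoOn (h.1 t)) ha hb

/-! ### the iterated pre-`tstar` bound -/

def auxA (α b g : ℝ → ℝ) : ℕ → ℝ → ℝ
  | 0 => fun _ => 0
  | k+1 => fun s => max (α (b s)) (α (g (auxA α b g k s)))

lemma auxA_isK0 {α b g : ℝ → ℝ} (hα : IsClassK α) (hb : IsK0 b) (hg : IsClassK g) :
    ∀ k, IsK0 (auxA α b g k)
  | 0 => K0.zero
  | k+1 => K0.max (K0.comp (K.toK0 hα) hb)
      (K0.comp (K.toK0 hα) (K0.comp (K.toK0 hg) (auxA_isK0 hα hb hg k)))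

/-! ### time shift of solutions -/

lemma sol_shift {n q : ℕ} (f : Vec n → Vec q → Vec n) (x0 : Vec n) (w : ℕ → Vec q)
    (s : ℕ) : ∀ t, sol f x0 w (s + t) = sol f (sol f x0 w s) (fun r => w (s + r)) t
  | 0 => rfl
  | t+1 => by
      show sol f x0 w (s + t + 1) = _
      rw [sol, sol, sol_shift f x0 w s t]

lemma tendsto_halves : Tendsto (fun t : ℕ => t / 2) atTop atTop :=
  tendsto_atTop_atTop.2 fun b => ⟨2 * b, fun a ha => by omega⟩


/-! ### the concrete comparison functions -/

section CorDefs

variable (β : ℝ → ℕ → ℝ) (γ1 γ2 γw γh αh : ℝ → ℝ) (σ1 : ℕ → ℝ) (tstar : ℕ)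

/-- bound on `|Δy(τ)|`, `τ < tstar`, initial-state part. -/
def corA : ℝ → ℝ := auxA αh (fun s => β s 0) γ2 tstar

/-- bound on `|Δy(τ)|`, `τ < tstar`, disturbance part. -/
def corB : ℝ → ℝ := auxA αh γ1 γ2 tstar

def corM1 : ℝ → ℝ := fun s => s + (β s 0 + γ2 (corA β γ2 αh tstar s))

def corN2 : ℝ → ℝ := fun w => w + (γ1 w + (γ2 (corB γ1 γ2 αh tstar w) + γ2 (γw w)))

def corBeta : ℝ → ℕ → ℝ := fun s t =>
  β (corM1 β γ2 αh tstar s) (t / 2) +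
    (if t < 2 * tstar then γ2 (corA β γ2 αh tstar s) else 0)

def corGam1 : ℝ → ℝ := fun w =>
  corN2 γ1 γ2 γw αh tstar w + (β (corN2 γ1 γ2 γw αh tstar w) 0 + σ1 0 * γ1 w)

def corGam2 : ℝ → ℝ := fun y => (y + γ2 (γh y)) + β (γ2 (γh y)) 0

end CorDefs

section CorLemmas

variable {β : ℝ → ℕ → ℝ} {γ1 γ2 γw γh αh : ℝ → ℝ} {σ1 : ℕ → ℝ} {tstar : ℕ}

lemma corA_isK0 (hβ : IsClassKL β) (hγ2 : IsClassK γ2) (hαh : IsClassK αh) :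
    IsK0 (corA β γ2 αh tstar) :=
  auxA_isK0 hαh (K.toK0 (hβ.1 0)) hγ2 tstar

lemma corB_isK0 (hγ1 : IsClassK γ1) (hγ2 : IsClassK γ2) (hαh : IsClassK αh) :
    IsK0 (corB γ1 γ2 αh tstar) :=
  auxA_isK0 hαh (K.toK0 hγ1) hγ2 tstar

lemma corM1_classK (hβ : IsClassKL β) (hγ2 : IsClassK γ2) (hαh : IsClassK αh) :
    IsClassK (corM1 β γ2 αh tstar) :=
  K.add_K0 K.id (K0.add (K.toK0 (hβ.1 0))
    (K0.comp (K.toK0 hγ2) (corA_isK0 hβ hγ2 hαh)))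

lemma corN2_classK (hγ1 : IsClassK γ1) (hγ2 : IsClassK γ2) (hγw : IsClassK γw)
    (hαh : IsClassK αh) : IsClassK (corN2 γ1 γ2 γw αh tstar) :=
  K.add_K0 K.id (K0.add (K.toK0 hγ1)
    (K0.add (K0.comp (K.toK0 hγ2) (corB_isK0 hγ1 hγ2 hαh))
      (K0.comp (K.toK0 hγ2) (K.toK0 hγw))))

lemma corBeta_classKL (hβ : IsClassKL β) (hγ2 : IsClassK γ2) (hαh : IsClassK αh) :
    IsClassKL (corBeta β γ2 αh tstar) := by
  have hM1 := corM1_classK (tstar := tstar) hβ hγ2 hαh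
  have hA0 := corA_isK0 (tstar := tstar) hβ hγ2 hαh
  constructor
  · intro t
    by_cases h2 : t < 2 * tstar
    · simp only [corBeta, if_pos h2]
      exact K.add_K0 (K.comp (hβ.1 (t / 2)) hM1) (K0.comp (K.toK0 hγ2) hA0)
    · simp only [corBeta, if_neg h2]
      exact K.add_K0 (K.comp (hβ.1 (t / 2)) hM1) K0.zero
  · intro s hs
    have hM1s : 0 ≤ corM1 β γ2 αh tstar s := K.nonneg hM1 hs
    have hAs : 0 ≤ γ2 (corA β γ2 αh tstar s) := K.nonneg hγ2 (hA0.2.2.2 s hs)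
    refine ⟨?_, ?_, ?_⟩
    · intro t
      refine add_nonneg (KL.nonneg hβ hM1s _) ?_
      split_ifs
      exacts [hAs, le_refl 0]
    · intro t1 t2 ht
      refine add_le_add (KL.anti hβ hM1s (Nat.div_le_div_right ht)) ?_
      by_cases h1 : t2 < 2 * tstar
      · rw [if_pos h1, if_pos (lt_of_le_of_lt ht h1)]
      · rw [if_neg h1]
        split_ifs
        exacts [hAs, le_refl 0]
    · have h1 : Tendsto (fun t : ℕ => β (corM1 β γ2 αh tstar s) (t / 2)) atTop (nhds 0) :=
        ((hβ.2 _ hM1s).2.2).comp tendsto_halves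
      have h2 : Tendsto
          (fun t : ℕ => if t < 2 * tstar then γ2 (corA β γ2 αh tstar s) else 0)
          atTop (nhds 0) := by
        refine Tendsto.congr' ?_ (tendsto_const_nhds (x := (0:ℝ)) (f := (atTop : Filter ℕ)))
        filter_upwards [eventually_ge_atTop (2 * tstar)] with t ht
        rw [if_neg (by omega)]
      simpa [corBeta] using h1.add h2

lemma corGam1_classK (hβ : IsClassKL β) (hγ1 : IsClassK γ1) (hγ2 : IsClassK γ2)
    (hγw : IsClassK γw) (hαh : IsClassK αh) (hσ1 : IsClassL σ1) :
    IsClassK (corGam1 β γ1 γ2 γw αh σ1 tstar) := by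
  have hN2 := corN2_classK (tstar := tstar) hγ1 hγ2 hγw hαh
  exact K.add_K0 hN2 (K0.add (K.toK0 (K.comp (hβ.1 0) hN2))
    (K0.const_mul (K.toK0 hγ1) (hσ1.1 0)))

lemma corGam2_classK (hβ : IsClassKL β) (hγ2 : IsClassK γ2) (hγh : IsClassK γh) :
    IsClassK (corGam2 β γ2 γh) := by
  have hG2 : IsK0 (fun y => γ2 (γh y)) := K0.comp (K.toK0 hγ2) (K.toK0 hγh)
  exact K.add_K0 (K.add_K0 K.id hG2) (K0.comp (K.toK0 (hβ.1 0)) hG2)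

end CorLemmas


end Cor1

open Cor1

/-- **Corollary 1**. -/
theorem corollary1_sample_based_iIOSS_on_W {n q p : ℕ}
    (f : Vec n → Vec q → Vec n) (h : Vec n → Vec p)
    (β : ℝ → ℕ → ℝ) (γ1 γ2 : ℝ → ℝ)
    (hβ : IsClassKL β) (hγ1 : IsClassK γ1) (hγ2 : IsClassK γ2)
    (hiIOSS : iIOSSBound f h β γ1 γ2)
    (αh : ℝ → ℝ) (hαh : IsClassK αh)
    (hKcont : ∀ x1 x2 : Vec n, ‖h x1 - h x2‖ ≤ αh ‖x1 - x2‖)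
    (W : Set (ℕ → Vec q))
    (δ : ℕ → ℕ) (δmax : ℕ) (hδ : ∀ i, 1 ≤ i → δ i ≤ δmax)
    (σ1 : ℕ → ℝ) (hσ1 : IsClassL σ1)
    (γw γh : ℝ → ℝ) (tstar : ℕ) (hγw : IsClassK γw) (hγh : IsClassK γh)
    (hcond : ∀ (x01 x02 : Vec n) (w1 w2 : ℕ → Vec q), w1 ∈ W → w2 ∈ W →
        ¬ pairISS f β γ1 σ1 x01 x02 w1 w2 →
        ∀ i, 1 ≤ i → ∀ t, tstar ≤ t →
          nDy f h x01 x02 w1 w2 t ≤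
            max (γh (supMem (sampSet δ i) t (nDy f h x01 x02 w1 w2)))
                (γw (supLt t (nDw w1 w2)))) :
    ∃ (β' : ℝ → ℕ → ℝ) (γ1' γ2' : ℝ → ℝ),
      IsClassKL β' ∧ IsClassK γ1' ∧ IsClassK γ2' ∧
        sampledIOSSBoundOn f h W δ β' γ1' γ2' := by
  classical
  refine ⟨corBeta β γ2 αh tstar, corGam1 β γ1 γ2 γw αh σ1 tstar, corGam2 β γ2 γh,
    corBeta_classKL hβ hγ2 hαh, corGam1_classK hβ hγ1 hγ2 hγw hαh hσ1,
    corGam2_classK hβ hγ2 hγh, ?_⟩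
  intro i hi x01 x02 w1 hw1 w2 hw2 t
  set Dw := nDw w1 w2 with hDwdef
  set Y := nDy f h x01 x02 w1 w2 with hYdef
  set X := nDx f x01 x02 w1 w2 with hXdef
  set s0 := ‖x01 - x02‖ with hs0def
  set Wt := supLt t Dw with hWtdef
  set Yt := supMem (sampSet δ i) t Y with hYtdef
  -- nonnegativity facts
  have hDwn : ∀ τ, 0 ≤ Dw τ := fun τ => norm_nonneg _
  have hYn : ∀ τ, 0 ≤ Y τ := fun τ => norm_nonneg _
  have hXn : ∀ τ, 0 ≤ X τ := fun τ => norm_nonneg _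
  have hs0 : (0:ℝ) ≤ s0 := norm_nonneg _
  have hWtn : 0 ≤ Wt := supLt_nonneg hDwn t
  have hYtn : 0 ≤ Yt := supMem_nonneg hYn _ t
  have hAk : ∀ k, IsK0 (auxA αh (fun s => β s 0) γ2 k) :=
    fun k => auxA_isK0 hαh (K.toK0 (hβ.1 0)) hγ2 k
  have hBk : ∀ k, IsK0 (auxA αh γ1 γ2 k) := fun k => auxA_isK0 hαh (K.toK0 hγ1) hγ2 k
  have hAs0 : 0 ≤ corA β γ2 αh tstar s0 := (hAk tstar).2.2.2 _ hs0
  have hBWn : 0 ≤ corB γ1 γ2 αh tstar Wt := (hBk tstar).2.2.2 _ hWtn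
  have hγ1W : 0 ≤ γ1 Wt := K.nonneg hγ1 hWtn
  have hγ2A : 0 ≤ γ2 (corA β γ2 αh tstar s0) := K.nonneg hγ2 hAs0
  have hγ2B : 0 ≤ γ2 (corB γ1 γ2 αh tstar Wt) := K.nonneg hγ2 hBWn
  have hγhY : 0 ≤ γh Yt := K.nonneg hγh hYtn
  have hγ2γhY : 0 ≤ γ2 (γh Yt) := K.nonneg hγ2 hγhY
  have hγwW : 0 ≤ γw Wt := K.nonneg hγw hWtn
  have hγ2γwW : 0 ≤ γ2 (γw Wt) := K.nonneg hγ2 hγwW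
  have hM1s0 : 0 ≤ corM1 β γ2 αh tstar s0 :=
    K.nonneg (corM1_classK hβ hγ2 hαh) hs0
  have hN2W : 0 ≤ corN2 γ1 γ2 γw αh tstar Wt :=
    K.nonneg (corN2_classK hγ1 hγ2 hγw hαh) hWtn
  -- structural component bounds
  have hM1ges0 : s0 ≤ corM1 β γ2 αh tstar s0 := by
    simp only [corM1]; linarith [KL.nonneg hβ hs0 0]
  have hM1geβ0 : β s0 0 ≤ corM1 β γ2 αh tstar s0 := by
    simp only [corM1]; linarith
  have hM1geγ2A : γ2 (corA β γ2 αh tstar s0) ≤ corM1 β γ2 αh tstar s0 := by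
    simp only [corM1]; linarith [KL.nonneg hβ hs0 0]
  have hb1 : β (corM1 β γ2 αh tstar s0) (t / 2) ≤ corBeta β γ2 αh tstar s0 t := by
    simp only [corBeta]; split_ifs <;> linarith
  have hb2 : β s0 t ≤ corBeta β γ2 αh tstar s0 t :=
    ((KL.mono1 hβ hs0 hM1ges0 t).trans (KL.anti hβ hM1s0 (Nat.div_le_self t 2))).trans hb1
  have hN2ge1 : γ1 Wt ≤ corN2 γ1 γ2 γw αh tstar Wt := by
    simp only [corN2]; linarith
  have hN2ge2 : γ2 (corB γ1 γ2 αh tstar Wt) ≤ corN2 γ1 γ2 γw αh tstar Wt := by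
    simp only [corN2]; linarith
  have hN2ge3 : γ2 (γw Wt) ≤ corN2 γ1 γ2 γw αh tstar Wt := by
    simp only [corN2]; linarith
  have hσγ1 : 0 ≤ σ1 0 * γ1 Wt := mul_nonneg (hσ1.1 0) hγ1W
  have hβN2 : 0 ≤ β (corN2 γ1 γ2 γw αh tstar Wt) 0 := KL.nonneg hβ hN2W 0
  have hg1N2 : corN2 γ1 γ2 γw αh tstar Wt ≤ corGam1 β γ1 γ2 γw αh σ1 tstar Wt := by
    simp only [corGam1]; linarith
  have hg1β : β (corN2 γ1 γ2 γw αh tstar Wt) 0 ≤ corGam1 β γ1 γ2 γw αh σ1 tstar Wt := by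
    simp only [corGam1]; linarith
  have hg1σ : σ1 0 * γ1 Wt ≤ corGam1 β γ1 γ2 γw αh σ1 tstar Wt := by
    simp only [corGam1]; linarith
  have hg2a : γ2 (γh Yt) ≤ corGam2 β γ2 γh Yt := by
    simp only [corGam2]; linarith [KL.nonneg hβ hγ2γhY 0]
  have hg2b : β (γ2 (γh Yt)) 0 ≤ corGam2 β γ2 γh Yt := by
    simp only [corGam2]; linarith
  by_cases hpsi : pairISS f β γ1 σ1 x01 x02 w1 w2
  · -- the pair generates i-ISS trajectories
    have hsup : sSup ((fun τ => γ1 (nDw w1 w2 τ) * σ1 (t - τ - 1)) '' {τ | τ < t})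
        ≤ σ1 0 * γ1 Wt := by
      refine Real.sSup_le ?_ hσγ1
      rintro y ⟨τ, hτ, rfl⟩
      calc γ1 (nDw w1 w2 τ) * σ1 (t - τ - 1)
          ≤ γ1 Wt * σ1 0 :=
            mul_le_mul (K.mono hγ1 (hDwn τ) (le_supLt hτ)) (hσ1.2.1 (Nat.zero_le _))
              (hσ1.1 _) hγ1W
        _ = σ1 0 * γ1 Wt := mul_comm _ _
    exact (hpsi t).trans (max_le (le_max_of_le_left hb2)
      (le_max_of_le_right (le_max_of_le_left (hsup.trans hg1σ))))
  · -- the pair does not generate i-ISS trajectories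
    have stepB : ∀ τ, tstar ≤ τ → τ < t → Y τ ≤ max (γh Yt) (γw Wt) := by
      intro τ ha hb
      refine (hcond x01 x02 w1 w2 hw1 hw2 hpsi i hi τ ha).trans (max_le_max ?_ ?_)
      · exact K.mono hγh (supMem_nonneg hYn _ _) (supMem_mono hYn hb.le)
      · exact K.mono hγw (supLt_nonneg hDwn _) (supLt_mono hDwn hb.le)
    have stepA : ∀ k, ∀ τ, τ < k → τ ≤ t →
        Y τ ≤ max (auxA αh (fun s => β s 0) γ2 k s0) (auxA αh γ1 γ2 k Wt) := by
      intro k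
      induction k with
      | zero => intro τ h1 _; exact absurd h1 (Nat.not_lt_zero τ)
      | succ k ih =>
        intro τ h1 h2
        have hAkn := (hAk k).2.2.2 s0 hs0
        have hBkn := (hBk k).2.2.2 Wt hWtn
        have hsupY : supLt τ Y ≤
            max (auxA αh (fun s => β s 0) γ2 k s0) (auxA αh γ1 γ2 k Wt) :=
          supLt_le (le_max_of_le_left hAkn) (fun τ' hτ' => ih τ' (by omega) (by omega))
        have hX2 : X τ ≤ max (β s0 0) (max (γ1 Wt)
            (γ2 (max (auxA αh (fun s => β s 0) γ2 k s0) (auxA αh γ1 γ2 k Wt)))) :=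
          (hiIOSS x01 x02 w1 w2 τ).trans (max_le_max (KL.anti hβ hs0 (Nat.zero_le τ))
            (max_le_max (K.mono hγ1 (supLt_nonneg hDwn τ) (supLt_mono hDwn h2))
              (K.mono hγ2 (supLt_nonneg hYn τ) hsupY)))
        have hY1 : Y τ ≤ αh (max (β s0 0) (max (γ1 Wt)
            (γ2 (max (auxA αh (fun s => β s 0) γ2 k s0) (auxA αh γ1 γ2 k Wt))))) :=
          (hKcont _ _).trans (K.mono hαh (hXn τ) hX2)
        have hsplit : αh (max (β s0 0) (max (γ1 Wt)
              (γ2 (max (auxA αh (fun s => β s 0) γ2 k s0) (auxA αh γ1 γ2 k Wt)))))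
            ≤ max (αh (β s0 0)) (max (αh (γ1 Wt))
              (αh (γ2 (max (auxA αh (fun s => β s 0) γ2 k s0) (auxA αh γ1 γ2 k Wt))))) :=
          K.map_max3 hαh (KL.nonneg hβ hs0 0) (K.nonneg hγ1 hWtn)
            (K.nonneg hγ2 (le_max_of_le_left hAkn))
        have hsplit2 : αh (γ2 (max (auxA αh (fun s => β s 0) γ2 k s0)
              (auxA αh γ1 γ2 k Wt)))
            ≤ max (αh (γ2 (auxA αh (fun s => β s 0) γ2 k s0)))
                (αh (γ2 (auxA αh γ1 γ2 k Wt))) :=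
          (K.mono hαh (K.nonneg hγ2 (le_max_of_le_left hAkn))
            (K.max_le hγ2 hAkn hBkn)).trans
            (K.max_le hαh (K.nonneg hγ2 hAkn) (K.nonneg hγ2 hBkn))
        refine (hY1.trans (hsplit.trans ?_))
        simp only [auxA]
        refine max_le (le_max_of_le_left (le_max_left _ _))
          (max_le (le_max_of_le_right (le_max_left _ _)) (hsplit2.trans ?_))
        exact max_le (le_max_of_le_left (le_max_right _ _))
          (le_max_of_le_right (le_max_right _ _))
    have hsupYγ2 : ∀ r, r ≤ t → γ2 (supLt r Y) ≤
        max (max (γ2 (corA β γ2 αh tstar s0)) (γ2 (corB γ1 γ2 αh tstar Wt)))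
          (max (γ2 (γh Yt)) (γ2 (γw Wt))) := by
      intro r hr
      have hsupY : supLt r Y ≤
          max (max (corA β γ2 αh tstar s0) (corB γ1 γ2 αh tstar Wt))
            (max (γh Yt) (γw Wt)) := by
        refine supLt_le (le_max_of_le_left (le_max_of_le_left hAs0)) ?_
        intro τ hτ
        by_cases hc : τ < tstar
        · exact le_max_of_le_left (stepA tstar τ hc (by omega))
        · exact le_max_of_le_right (stepB τ (by omega) (by omega))
      refine (K.mono hγ2 (supLt_nonneg hYn r) hsupY).trans ?_
      exact (K.max_le hγ2 (le_max_of_le_left hAs0) (le_max_of_le_left hγhY)).trans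
        (max_le_max (K.max_le hγ2 hAs0 hBWn) (K.max_le hγ2 hγhY hγwW))
    by_cases ht2 : t < 2 * tstar
    · -- small times
      have hbA : γ2 (corA β γ2 αh tstar s0) ≤ corBeta β γ2 αh tstar s0 t := by
        simp only [corBeta, if_pos ht2]
        linarith [KL.nonneg hβ hM1s0 (t / 2)]
      refine (hiIOSS x01 x02 w1 w2 t).trans (max_le (le_max_of_le_left hb2)
        (max_le ?_ ?_))
      · exact le_max_of_le_right (le_max_of_le_left (hN2ge1.trans hg1N2))
      · refine (hsupYγ2 t le_rfl).trans (max_le (max_le ?_ ?_) (max_le ?_ ?_))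
        · exact le_max_of_le_left hbA
        · exact le_max_of_le_right (le_max_of_le_left (hN2ge2.trans hg1N2))
        · exact le_max_of_le_right (le_max_of_le_right hg2a)
        · exact le_max_of_le_right (le_max_of_le_left (hN2ge3.trans hg1N2))
    · -- large times: restart at time t / 2
      have hts : tstar ≤ t / 2 := by omega
      have hst : t / 2 ≤ t := Nat.div_le_self t 2
      have hhalf : t / 2 ≤ t - t / 2 := by omega
      have hX : X t = nDx f (sol f x01 w1 (t / 2)) (sol f x02 w2 (t / 2))
          (fun r => w1 (t / 2 + r)) (fun r => w2 (t / 2 + r)) (t - t / 2) := by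
        show ‖sol f x01 w1 t - sol f x02 w2 t‖ = _
        rw [nDx, ← sol_shift, ← sol_shift, Nat.add_sub_cancel' hst]
      have h2 := hiIOSS (sol f x01 w1 (t / 2)) (sol f x02 w2 (t / 2))
        (fun r => w1 (t / 2 + r)) (fun r => w2 (t / 2 + r)) (t - t / 2)
      have hyb : supLt (t - t / 2) (nDy f h (sol f x01 w1 (t / 2)) (sol f x02 w2 (t / 2))
            (fun r => w1 (t / 2 + r)) (fun r => w2 (t / 2 + r)))
          ≤ max (γh Yt) (γw Wt) := by
        refine supLt_le (le_max_of_le_left hγhY) ?_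
        intro r hr
        have he : nDy f h (sol f x01 w1 (t / 2)) (sol f x02 w2 (t / 2))
            (fun r => w1 (t / 2 + r)) (fun r => w2 (t / 2 + r)) r = Y (t / 2 + r) := by
          show _ = ‖h (sol f x01 w1 (t / 2 + r)) - h (sol f x02 w2 (t / 2 + r))‖
          rw [nDy, sol_shift, sol_shift]
        rw [he]
        exact stepB (t / 2 + r) (by omega) (by omega)
      have hwb : supLt (t - t / 2)
          (nDw (fun r => w1 (t / 2 + r)) (fun r => w2 (t / 2 + r))) ≤ Wt := by
        refine supLt_le hWtn ?_
        intro r hr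
        have he : nDw (fun r => w1 (t / 2 + r)) (fun r => w2 (t / 2 + r)) r
            = Dw (t / 2 + r) := rfl
        rw [he]
        exact le_supLt (g := Dw) (by omega)
      have hz : X (t / 2) ≤ max (corM1 β γ2 αh tstar s0)
          (max (corN2 γ1 γ2 γw αh tstar Wt) (γ2 (γh Yt))) := by
        refine (hiIOSS x01 x02 w1 w2 (t / 2)).trans (max_le ?_ (max_le ?_ ?_))
        · exact le_max_of_le_left ((KL.anti hβ hs0 (Nat.zero_le _)).trans hM1geβ0)
        · exact le_max_of_le_right (le_max_of_le_left
            ((K.mono hγ1 (supLt_nonneg hDwn _) (supLt_mono hDwn hst)).trans hN2ge1))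
        · refine (hsupYγ2 (t / 2) hst).trans (max_le (max_le ?_ ?_) (max_le ?_ ?_))
          · exact le_max_of_le_left hM1geγ2A
          · exact le_max_of_le_right (le_max_of_le_left hN2ge2)
          · exact le_max_of_le_right (le_max_of_le_right le_rfl)
          · exact le_max_of_le_right (le_max_of_le_left hN2ge3)
      rw [hX]
      refine h2.trans (max_le ?_ (max_le ?_ ?_))
      · -- the β-term
        have e1 : ‖sol f x01 w1 (t / 2) - sol f x02 w2 (t / 2)‖ = X (t / 2) := rfl
        rw [e1]
        have hb : β (X (t / 2)) (t - t / 2) ≤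
            max (β (corM1 β γ2 αh tstar s0) (t - t / 2))
              (max (β (corN2 γ1 γ2 γw αh tstar Wt) (t - t / 2))
                (β (γ2 (γh Yt)) (t - t / 2))) :=
          (KL.mono1 hβ (hXn _) hz _).trans
            (K.map_max3 (hβ.1 (t - t / 2)) hM1s0 hN2W hγ2γhY)
        refine hb.trans (max_le ?_ (max_le ?_ ?_))
        · exact le_max_of_le_left ((KL.anti hβ hM1s0 hhalf).trans hb1)
        · exact le_max_of_le_right (le_max_of_le_left
            ((KL.anti hβ hN2W (Nat.zero_le _)).trans hg1β))
        · exact le_max_of_le_right (le_max_of_le_right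
            ((KL.anti hβ hγ2γhY (Nat.zero_le _)).trans hg2b))
      · exact le_max_of_le_right (le_max_of_le_left
          (((K.mono hγ1 (supLt_nonneg (fun r => norm_nonneg _) _) hwb).trans
            hN2ge1).trans hg1N2))
      · refine le_max_of_le_right ?_
        refine ((K.mono hγ2 (supLt_nonneg (fun r => norm_nonneg _) _) hyb).trans
          (K.max_le hγ2 hγhY hγwW)).trans (max_le ?_ ?_)
        · exact le_max_of_le_right hg2a
        · exact le_max_of_le_left (hN2ge3.trans hg1N2)
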